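/- arXiv:1902.01219 — 3 statements merged into one kernel-verified Lean document; each statement's English description precedes it below -/
import Mathlib

section
/- For Z ~ Poisson(λ) and r ∈ {2/3, 4/3}, the expectation of (max(Z,1))^{−r} satisfies (1/2)·(1/max(e²λ,1))^r ≤ E[(Z ∨ 1)^{−r}] ≤ 6·(e²/max(λ,1))^r. -/
open Real

lemma tsum_pow_div_factorial (x : ℝ) : ∑' n : ℕ, x ^ n / n.factorial = Real.exp x := by
  rw [Real.exp_eq_exp_ℝ, NormedSpace.exp_eq_tsum_div]

lemma summable_poisson (lam : ℝ) :
    Summable (fun n : ℕ => Real.exp (-lam) * lam ^ n / n.factorial) := by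
  simpa [mul_div_assoc] using (Real.summable_pow_div_factorial lam).mul_left (Real.exp (-lam))

lemma tsum_poisson (lam : ℝ) :
    ∑' n : ℕ, Real.exp (-lam) * lam ^ n / n.factorial = 1 := by
  simp_rw [mul_div_assoc]
  rw [tsum_mul_left, tsum_pow_div_factorial, ← Real.exp_add]
  simp

lemma shift_eq (lam : ℝ) : (fun n : ℕ => ((n+1 : ℕ) : ℝ) * (Real.exp (-lam) * lam ^ (n+1) / (n+1).factorial))
    = fun n : ℕ => (Real.exp (-lam) * lam) * (lam ^ n / n.factorial) := by
  funext n
  have h1 : ((n.factorial : ℝ)) ≠ 0 := Nat.cast_ne_zero.mpr n.factorial_ne_zero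
  have h2 : ((n : ℝ) + 1) ≠ 0 := by positivity
  rw [Nat.factorial_succ]
  push_cast
  field_simp
  ring

lemma summable_mul_poisson (lam : ℝ) :
    Summable (fun n : ℕ => (n : ℝ) * (Real.exp (-lam) * lam ^ n / n.factorial)) := by
  rw [← summable_nat_add_iff 1]
  exact (shift_eq lam) ▸ ((Real.summable_pow_div_factorial lam).mul_left _)

lemma tsum_mul_poisson (lam : ℝ) :
    ∑' n : ℕ, (n : ℝ) * (Real.exp (-lam) * lam ^ n / n.factorial) = lam := by
  rw [Summable.tsum_eq_zero_add (summable_mul_poisson lam)]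
  push_cast
  rw [show (fun n : ℕ => ((n : ℝ)+1) * (Real.exp (-lam) * lam ^ (n+1) / (n+1).factorial))
      = fun n : ℕ => (Real.exp (-lam) * lam) * (lam ^ n / n.factorial) by
    have := shift_eq lam; push_cast at this; exact this]
  rw [tsum_mul_left, tsum_pow_div_factorial]
  have h : Real.exp (-lam) * Real.exp lam = 1 := by rw [← Real.exp_add]; simp
  linear_combination lam * h

lemma poisson_pos (lam : ℝ) (hlam : 0 ≤ lam) (n : ℕ) :
    0 ≤ Real.exp (-lam) * lam ^ n / n.factorial := by positivity

lemma poisson_head_ge (lam : ℝ) (hlam : 0 < lam) :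
    (1:ℝ)/2 ≤ ∑ i ∈ Finset.range (⌊2*lam⌋₊ + 1), Real.exp (-lam) * lam ^ i / i.factorial := by
  set p : ℕ → ℝ := fun n => Real.exp (-lam) * lam ^ n / n.factorial with hpdef
  have hp : Summable p := summable_poisson lam
  have hpos : ∀ n, 0 ≤ p n := poisson_pos lam hlam.le
  set N := ⌊2*lam⌋₊ with hN
  set s := Finset.range (N + 1) with hs
  have hkey : (∑ i ∈ s, p i) + ∑' i : {x : ℕ // x ∉ s}, p i = ∑' n, p n :=
    Summable.sum_add_tsum_subtype_compl hp s
  have htot : ∑' n, p n = 1 := tsum_poisson lam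
  -- Markov: (N+1) * tail ≤ lam
  have hsub : Summable (fun i : {x : ℕ // x ∉ s} => p i) := hp.comp_injective Subtype.val_injective
  have hnsub : Summable (fun i : {x : ℕ // x ∉ s} => (i : ℝ) * p i) :=
    (summable_mul_poisson lam).comp_injective Subtype.val_injective
  have hmark : ((N : ℝ) + 1) * ∑' i : {x : ℕ // x ∉ s}, p i ≤ lam := by
    rw [← tsum_mul_left]
    calc ∑' i : {x : ℕ // x ∉ s}, ((N : ℝ) + 1) * p i
        ≤ ∑' i : {x : ℕ // x ∉ s}, (i : ℝ) * p i := by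
          apply Summable.tsum_le_tsum _ (hsub.mul_left _) hnsub
          intro i
          have hi : N + 1 ≤ (i : ℕ) := by
            have := i.2
            simp only [hs, Finset.mem_range, not_lt] at this
            exact this
          have : ((N : ℝ) + 1) ≤ ((i : ℕ) : ℝ) := by exact_mod_cast hi
          exact mul_le_mul_of_nonneg_right this (hpos _)
      _ ≤ ∑' n : ℕ, (n : ℝ) * p n := by
          apply Summable.tsum_le_tsum_of_inj (Subtype.val) Subtype.val_injective
            (fun c _ => mul_nonneg (Nat.cast_nonneg c) (hpos c)) (fun i => le_rfl)
            hnsub (summable_mul_poisson lam)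
      _ = lam := tsum_mul_poisson lam
  have htail : ∑' i : {x : ℕ // x ∉ s}, p i ≤ 1/2 := by
    have hNlt : 2 * lam < (N : ℝ) + 1 := Nat.lt_floor_add_one (2*lam)
    have hNpos : (0:ℝ) < (N : ℝ) + 1 := by positivity
    have htail_nonneg : 0 ≤ ∑' i : {x : ℕ // x ∉ s}, p i := tsum_nonneg (fun i => hpos _)
    nlinarith
  linarith [hkey, htot.symm ▸ hkey]



lemma summable_shift2 (lam : ℝ) :
    Summable (fun n : ℕ => lam ^ (n+2) / (n+2).factorial) :=
  (summable_nat_add_iff 2).mpr (Real.summable_pow_div_factorial lam)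

lemma summable_poisson2 (lam : ℝ) (hlam : 0 < lam) :
    Summable (fun n : ℕ => Real.exp (-lam) * lam ^ n / (n+2).factorial) := by
  have := (summable_shift2 lam).mul_left (Real.exp (-lam) / lam^2)
  apply this.congr
  intro n
  have h2 : ((n+2).factorial : ℝ) ≠ 0 := Nat.cast_ne_zero.mpr (n+2).factorial_ne_zero
  field_simp
  ring

lemma tsum_poisson2_le (lam : ℝ) (hlam : 0 < lam) :
    ∑' n : ℕ, Real.exp (-lam) * lam ^ n / (n+2).factorial ≤ 1 / lam^2 := by
  have key : ∑' n : ℕ, lam ^ (n+2) / (n+2).factorial ≤ Real.exp lam := by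
    rw [← tsum_pow_div_factorial lam]
    exact Summable.tsum_le_tsum_of_inj (fun n => n + 2) (fun a b h => by simpa using h)
      (fun c _ => by positivity) (fun n => le_rfl) (summable_shift2 lam)
      (Real.summable_pow_div_factorial lam)
  have heq : ∑' n : ℕ, Real.exp (-lam) * lam ^ n / (n+2).factorial
      = (Real.exp (-lam) / lam^2) * ∑' n : ℕ, lam ^ (n+2) / (n+2).factorial := by
    rw [← tsum_mul_left]
    apply tsum_congr
    intro n
    have h2 : ((n+2).factorial : ℝ) ≠ 0 := Nat.cast_ne_zero.mpr (n+2).factorial_ne_zero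
    field_simp
    ring
  rw [heq]
  have hle : (Real.exp (-lam) / lam^2) * ∑' n : ℕ, lam ^ (n+2) / (n+2).factorial
      ≤ (Real.exp (-lam) / lam^2) * Real.exp lam :=
    mul_le_mul_of_nonneg_left key (by positivity)
  refine hle.trans ?_
  rw [Real.exp_neg, div_mul_eq_mul_div, inv_mul_cancel₀ (Real.exp_ne_zero lam)]

lemma ptwise (lam m r : ℝ) (hm : 1 ≤ m) (hlam : 0 < lam) (hr0 : 0 < r) (hr2 : r ≤ 2) :
    m ^ (-r) ≤ lam ^ (-r) * ((r/2) * (lam^2/m^2) + (1 - r/2)) := by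
  have hm0 : (0:ℝ) < m := lt_of_lt_of_le one_pos hm
  have key := Real.geom_mean_le_arith_mean2_weighted (by linarith : (0:ℝ) ≤ r/2)
    (by linarith : (0:ℝ) ≤ 1 - r/2) (le_of_lt (by positivity : (0:ℝ) < lam^2/m^2))
    zero_le_one (by ring)
  rw [Real.one_rpow, mul_one, mul_one] at key
  have h1 : (lam^2/m^2 : ℝ) ^ (r/2) = lam ^ r / m ^ r := by
    rw [show lam^2/m^2 = (lam/m)^2 by ring, ← Real.rpow_natCast (lam/m) 2,
      ← Real.rpow_mul (by positivity), show (2:ℕ) * (r/2) = r by push_cast; ring,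
      Real.div_rpow hlam.le hm0.le]
  rw [h1] at key
  have h2 : m ^ (-r) = lam ^ (-r) * (lam ^ r / m ^ r) := by
    rw [Real.rpow_neg hlam.le, Real.rpow_neg hm0.le]
    field_simp
  rw [h2]
  exact mul_le_mul_of_nonneg_left key (Real.rpow_nonneg hlam.le _)

/-- For `Z ~ Poisson(λ)` and `r ∈ {2/3, 4/3}`,
`(1/2) * (1 / max (e² λ) 1)^r ≤ E[(Z ∨ 1)^(-r)] ≤ 6 * (e² / max λ 1)^r`. -/
theorem poisson_inv_moment_bounds
    (lam : ℝ) (hlam : 0 ≤ lam) (r : ℝ) (hr : r = 2 / 3 ∨ r = 4 / 3) :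
    (1 / 2) * (1 / max (Real.exp 2 * lam) 1) ^ r
        ≤ (∑' n : ℕ, (Real.exp (-lam) * lam ^ n / n.factorial) * ((max n 1 : ℕ) : ℝ) ^ (-r)) ∧
      (∑' n : ℕ, (Real.exp (-lam) * lam ^ n / n.factorial) * ((max n 1 : ℕ) : ℝ) ^ (-r))
        ≤ 6 * (Real.exp 2 / max lam 1) ^ r := by
  have hr0 : 0 < r := by rcases hr with h | h <;> norm_num [h]
  have hr2 : r ≤ 2 := by rcases hr with h | h <;> norm_num [h]
  have e3 : (3:ℝ) ≤ Real.exp 2 := by have := Real.add_one_le_exp (2:ℝ); linarith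
  set p : ℕ → ℝ := fun n => Real.exp (-lam) * lam ^ n / n.factorial with hpdef
  set m : ℕ → ℝ := fun n => ((max n 1 : ℕ) : ℝ) with hmdef
  set f : ℕ → ℝ := fun n => p n * m n ^ (-r) with hfdef
  have hppos : ∀ n, 0 ≤ p n := poisson_pos lam hlam
  have hm1 : ∀ n, 1 ≤ m n := fun n => by
    simp only [hmdef]; exact_mod_cast Nat.one_le_iff_ne_zero.mpr (by positivity)
  have hm0 : ∀ n, 0 < m n := fun n => lt_of_lt_of_le one_pos (hm1 n)
  have hfnonneg : ∀ n, 0 ≤ f n := fun n =>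
    mul_nonneg (hppos n) (Real.rpow_nonneg (hm0 n).le _)
  have hfle : ∀ n, f n ≤ p n := fun n => by
    have : m n ^ (-r) ≤ 1 :=
      Real.rpow_le_one_of_one_le_of_nonpos (hm1 n) (neg_nonpos.mpr hr0.le)
    calc f n ≤ p n * 1 := mul_le_mul_of_nonneg_left this (hppos n)
      _ = p n := mul_one _
  have hp : Summable p := summable_poisson lam
  have hf : Summable f := Summable.of_nonneg_of_le hfnonneg hfle hp
  constructor
  · -- lower bound
    rcases le_or_gt (Real.exp 2 * lam) 1 with hsm | hbg
    · rw [max_eq_right hsm]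
      have h0 : f 0 ≤ ∑' n, f n := Summable.le_tsum hf 0 (fun i _ => hfnonneg i)
      have hf0 : f 0 = Real.exp (-lam) := by
        simp [hfdef, hpdef, hmdef]
      have hlam3 : lam ≤ 1/3 := by nlinarith
      have := Real.add_one_le_exp (-lam)
      rw [hf0] at h0
      have : (1:ℝ)/2 ≤ Real.exp (-lam) := by linarith
      calc (1:ℝ)/2 * (1/1) ^ r = 1/2 := by norm_num
        _ ≤ Real.exp (-lam) := this
        _ ≤ ∑' n, f n := h0
    · have hlam0 : 0 < lam := by nlinarith [Real.exp_pos (2:ℝ)]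
      rw [max_eq_left hbg.le]
      set C : ℝ := (1 / (Real.exp 2 * lam)) ^ r with hC
      have hxpos : (0:ℝ) < Real.exp 2 * lam := by positivity
      have hCnonneg : 0 ≤ C := Real.rpow_nonneg (by positivity) _
      have hCe : C = (Real.exp 2 * lam) ^ (-r) := by
        rw [hC, one_div, Real.inv_rpow hxpos.le, ← Real.rpow_neg hxpos.le]
      set N := ⌊2*lam⌋₊ with hN
      have hhead := poisson_head_ge lam hlam0
      have step : ∀ i ∈ Finset.range (N+1), p i * C ≤ f i := by
        intro i hi
        have hile : (i:ℝ) ≤ Real.exp 2 * lam := by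
          have h1 : i ≤ N := Nat.lt_succ_iff.mp (Finset.mem_range.mp hi)
          have h2 : (N:ℝ) ≤ 2*lam := Nat.floor_le (by positivity)
          have h3 : 2*lam ≤ Real.exp 2 * lam :=
            mul_le_mul_of_nonneg_right (by linarith) hlam0.le
          have : (i:ℝ) ≤ (N:ℝ) := by exact_mod_cast h1
          linarith
        have hmle : m i ≤ Real.exp 2 * lam := by
          simp only [hmdef]
          push_cast [Nat.cast_max]
          exact max_le hile hbg.le
        have : (Real.exp 2 * lam) ^ (-r) ≤ m i ^ (-r) :=
          Real.rpow_le_rpow_of_nonpos (hm0 i) hmle (neg_nonpos.mpr hr0.le)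
        rw [hCe]
        exact mul_le_mul_of_nonneg_left this (hppos i)
      calc (1:ℝ)/2 * C ≤ (∑ i ∈ Finset.range (N+1), p i) * C :=
            mul_le_mul_of_nonneg_right hhead hCnonneg
        _ = ∑ i ∈ Finset.range (N+1), p i * C := by rw [Finset.sum_mul]
        _ ≤ ∑ i ∈ Finset.range (N+1), f i := Finset.sum_le_sum step
        _ ≤ ∑' n, f n := Summable.sum_le_tsum _ (fun i _ => hfnonneg i) hf
  · -- upper bound
    rcases le_or_gt lam 1 with h1 | h1
    · rw [max_eq_right h1]
      have : ∑' n, f n ≤ ∑' n, p n := Summable.tsum_le_tsum hfle hf hp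
      rw [tsum_poisson lam] at this
      have h2 : (1:ℝ) ≤ (Real.exp 2 / 1) ^ r := by
        rw [div_one]
        exact Real.one_le_rpow (by linarith) hr0.le
      calc ∑' n, f n ≤ 1 := this
        _ ≤ 6 * (Real.exp 2 / 1) ^ r := by nlinarith
    · have hlam0 : (0:ℝ) < lam := lt_trans one_pos h1
      rw [max_eq_left h1.le]
      set q : ℕ → ℝ := fun n => Real.exp (-lam) * lam ^ n / (n+2).factorial with hqdef
      set A : ℝ := lam ^ (-r) * ((r/2) * (9 * lam^2)) with hA
      set B : ℝ := lam ^ (-r) * (1 - r/2) with hB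
      have hq : Summable q := summable_poisson2 lam hlam0
      have hlamr : 0 ≤ lam ^ (-r) := Real.rpow_nonneg hlam0.le _
      have hAn : 0 ≤ A := mul_nonneg hlamr (by positivity)
      have hBn : 0 ≤ B := mul_nonneg hlamr (by linarith)
      have hg : Summable (fun n => A * q n + B * p n) :=
        (hq.mul_left A).add (hp.mul_left B)
      have hpt : ∀ n, f n ≤ A * q n + B * p n := by
        intro n
        have hc : (0:ℝ) < ((n:ℝ)+1) * ((n:ℝ)+2) := by positivity
        have hm2 : ((n:ℝ)+1) * ((n:ℝ)+2) ≤ 9 * m n ^ 2 := by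
          rcases Nat.eq_zero_or_pos n with h | h
          · subst h; simp [hmdef]; norm_num
          · have : m n = (n:ℝ) := by
              simp only [hmdef]
              rw [max_eq_left h]
            rw [this]
            have h1 : (1:ℝ) ≤ (n:ℝ) := by exact_mod_cast h
            nlinarith
        have h3 : lam^2 / m n ^ 2 ≤ 9 * lam^2 / (((n:ℝ)+1) * ((n:ℝ)+2)) := by
          rw [div_le_div_iff₀ (by positivity) hc]
          nlinarith [sq_nonneg lam, sq_nonneg (m n)]
        have h4 : q n = p n / (((n:ℝ)+1) * ((n:ℝ)+2)) := by
          have hfact : (((n+2).factorial : ℕ) : ℝ)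
              = (n.factorial : ℝ) * (((n:ℝ)+1) * ((n:ℝ)+2)) := by
            rw [show n+2 = (n+1)+1 by ring, Nat.factorial_succ, Nat.factorial_succ]
            push_cast
            ring
          simp only [hqdef, hpdef]
          rw [hfact]
          field_simp
        have key := ptwise lam (m n) r (hm1 n) hlam0 hr0 hr2
        have step1 : f n ≤ p n * (lam ^ (-r) * ((r/2) * (lam^2 / m n ^2) + (1 - r/2))) :=
          mul_le_mul_of_nonneg_left key (hppos n)
        have step2 : p n * (lam ^ (-r) * ((r/2) * (lam^2 / m n ^2) + (1 - r/2)))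
            ≤ p n * (lam ^ (-r) * ((r/2) * (9 * lam^2 / (((n:ℝ)+1) * ((n:ℝ)+2))) + (1 - r/2))) := by
          apply mul_le_mul_of_nonneg_left _ (hppos n)
          apply mul_le_mul_of_nonneg_left _ hlamr
          have := mul_le_mul_of_nonneg_left h3 (by linarith : (0:ℝ) ≤ r/2)
          linarith
        have step3 : p n * (lam ^ (-r) * ((r/2) * (9 * lam^2 / (((n:ℝ)+1) * ((n:ℝ)+2))) + (1 - r/2)))
            = A * q n + B * p n := by
          rw [h4, hA, hB]
          field_simp
        linarith
      have hsum : ∑' n, f n ≤ A * (∑' n, q n) + B * 1 := by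
        calc ∑' n, f n ≤ ∑' n, (A * q n + B * p n) := Summable.tsum_le_tsum hpt hf hg
          _ = A * (∑' n, q n) + B * (∑' n, p n) := by
            rw [Summable.tsum_add (hq.mul_left A) (hp.mul_left B), tsum_mul_left, tsum_mul_left]
          _ = A * (∑' n, q n) + B * 1 := by rw [tsum_poisson lam]
      have hT : ∑' n, q n ≤ 1 / lam^2 := tsum_poisson2_le lam hlam0
      have hfin : A * (∑' n, q n) + B * 1 ≤ lam ^ (-r) * (1 + 4*r) := by
        have h5 : A * (∑' n, q n) ≤ A * (1/lam^2) := mul_le_mul_of_nonneg_left hT hAn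
        have h6 : A * (1/lam^2) + B * 1 = lam ^ (-r) * (1 + 4*r) := by
          rw [hA, hB]
          field_simp
          ring
        linarith
      have hdr : (Real.exp 2 / lam) ^ r = Real.exp (2*r) * lam ^ (-r) := by
        rw [Real.div_rpow (Real.exp_pos 2).le hlam0.le, Real.rpow_neg hlam0.le,
          Real.rpow_def_of_pos (Real.exp_pos 2), Real.log_exp, div_eq_mul_inv]
      have hnum : (1:ℝ) + 4*r ≤ 6 * Real.exp (2*r) := by
        have := Real.add_one_le_exp (2*r)
        nlinarith
      calc ∑' n, f n ≤ lam ^ (-r) * (1 + 4*r) := le_trans hsum hfin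
        _ ≤ lam ^ (-r) * (6 * Real.exp (2*r)) :=
            mul_le_mul_of_nonneg_left hnum hlamr
        _ = 6 * (Real.exp 2 / lam) ^ r := by rw [hdr]; ring
end

section
/- Let Z ~ Poisson(λ). If λ ≥ e^{−2}, then E[Z^{4/3}] ≤ λ^{4/3}·e^{8/3} + e^{−λ}/(1 − e^{−1/2}); and if λ < e^{−2}, then E[Z^{4/3}] ≤ e^{−λ}·λ·(2^{1/3} + e). -/
open Real

lemma pow8_le (n : ℕ) (hn : 1 ≤ n) : ((n : ℝ)) ^ (8 : ℕ) ≤ Real.exp 1 ^ (3 * n) := by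
  have he : (2.71 : ℝ) ≤ Real.exp 1 := by
    have := Real.exp_one_gt_d9; linarith
  have hb : ∀ k : ℕ, (2.71 : ℝ) ^ k ≤ Real.exp 1 ^ k := fun k =>
    pow_le_pow_left₀ (by norm_num) he k
  rcases Nat.lt_or_ge n 4 with h4 | h4
  · interval_cases n
    · refine le_trans ?_ (hb 3); norm_num
    · refine le_trans ?_ (hb 6); norm_num
    · refine le_trans ?_ (hb 9); norm_num
  · induction n, h4 using Nat.le_induction with
    | base => refine le_trans ?_ (hb 12); norm_num
    | succ m hm ih =>
      have ih' := ih (by omega)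
      have h1 : ((m : ℝ) + 1) ≤ 5 / 4 * m := by
        have : (4 : ℝ) ≤ m := by exact_mod_cast hm
        linarith
      have h2 : ((m : ℝ) + 1) ^ (8 : ℕ) ≤ (5 / 4 * m) ^ (8 : ℕ) :=
        pow_le_pow_left₀ (by positivity) h1 8
      have h3 : ((5 : ℝ) / 4 * m) ^ (8 : ℕ) = (5 / 4) ^ (8 : ℕ) * (m : ℝ) ^ (8 : ℕ) := by ring
      have h5 : ((5 : ℝ) / 4) ^ (8 : ℕ) ≤ Real.exp 1 ^ (3 : ℕ) := by
        refine le_trans ?_ (hb 3); norm_num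
      have hpos : (0 : ℝ) ≤ (m : ℝ) ^ (8 : ℕ) := by positivity
      calc ((m + 1 : ℕ) : ℝ) ^ (8 : ℕ) = ((m : ℝ) + 1) ^ (8 : ℕ) := by push_cast; ring
        _ ≤ (5 / 4) ^ (8 : ℕ) * (m : ℝ) ^ (8 : ℕ) := by rw [← h3]; exact h2
        _ ≤ Real.exp 1 ^ (3 : ℕ) * (Real.exp 1 ^ (3 * m)) := by
            exact mul_le_mul h5 ih' hpos (by positivity)
        _ = Real.exp 1 ^ (3 * (m + 1)) := by rw [← pow_add]; ring_nf

lemma rpow43_le (n : ℕ) : (n : ℝ) ^ ((4 : ℝ) / 3) ≤ Real.exp ((n : ℝ) / 2) := by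
  rcases Nat.eq_zero_or_pos n with rfl | hn
  · rw [Nat.cast_zero, Real.zero_rpow (by norm_num : (4:ℝ)/3 ≠ 0)]
    positivity
  · have h8 := pow8_le n hn
    have e1 : (n : ℝ) ^ ((4 : ℝ) / 3) = ((n : ℝ) ^ (8 : ℕ)) ^ ((1 : ℝ) / 6) := by
      rw [← Real.rpow_natCast (n : ℝ) 8, ← Real.rpow_mul (Nat.cast_nonneg n)]
      norm_num
    have e2 : Real.exp ((n : ℝ) / 2) = (Real.exp 1 ^ (3 * n)) ^ ((1 : ℝ) / 6) := by
      rw [← Real.exp_nat_mul, ← Real.exp_mul]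
      congr 1
      push_cast; ring
    rw [e1, e2]
    exact Real.rpow_le_rpow (by positivity) h8 (by norm_num)

lemma exp_tsum' (x : ℝ) : Real.exp x = ∑' n : ℕ, x ^ n / n.factorial := by
  rw [Real.exp_eq_exp_ℝ, NormedSpace.exp_eq_tsum_div]

lemma pow_div_fact_le_exp' (n : ℕ) : (n : ℝ) ^ n / n.factorial ≤ Real.exp n := by
  rw [exp_tsum']
  exact Summable.le_tsum (Real.summable_pow_div_factorial _) n fun j _ => by positivity



lemma big_case (lam : ℝ) (hlam : 0 ≤ lam) :
    (∑' n : ℕ, (Real.exp (-lam) * lam ^ n / n.factorial) * (n : ℝ) ^ ((4 : ℝ) / 3))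
      ≤ lam ^ ((4 : ℝ) / 3) * Real.exp (8 / 3)
          + Real.exp (-lam) / (1 - Real.exp (-(1 / 2))) := by
  set C : ℝ := lam ^ ((4 : ℝ) / 3) * Real.exp (8 / 3) with hC
  have hCnn : 0 ≤ C := by positivity
  set r : ℝ := Real.exp (-(1 / 2)) with hr
  have hr0 : (0 : ℝ) ≤ r := (Real.exp_pos _).le
  have hr1 : r < 1 := Real.exp_lt_one_iff.2 (by norm_num)
  set a : ℕ → ℝ := fun n => Real.exp (-lam) * (lam ^ n / n.factorial) * C with ha
  set b : ℕ → ℝ := fun n => Real.exp (-lam) * r ^ n with hb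
  have hann : ∀ n, 0 ≤ a n := fun n => by positivity
  have hbnn : ∀ n, 0 ≤ b n := fun n => by positivity
  have key : ∀ n : ℕ, (Real.exp (-lam) * lam ^ n / n.factorial) * (n : ℝ) ^ ((4 : ℝ) / 3)
      ≤ a n + b n := by
    intro n
    have hrw : (Real.exp (-lam) * lam ^ n / n.factorial) * (n : ℝ) ^ ((4 : ℝ) / 3)
        = Real.exp (-lam) * ((lam ^ n / n.factorial) * (n : ℝ) ^ ((4 : ℝ) / 3)) := by ring
    rcases le_or_gt ((n : ℝ)) (Real.exp 2 * lam) with hle | hgt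
    · -- n ≤ e² λ : use n^{4/3} ≤ C
      have h1 : (n : ℝ) ^ ((4 : ℝ) / 3) ≤ (Real.exp 2 * lam) ^ ((4 : ℝ) / 3) :=
        Real.rpow_le_rpow (Nat.cast_nonneg n) hle (by norm_num)
      have h2 : (Real.exp 2 * lam) ^ ((4 : ℝ) / 3)
          = Real.exp (8 / 3) * lam ^ ((4 : ℝ) / 3) := by
        rw [Real.mul_rpow (Real.exp_pos 2).le hlam, ← Real.exp_mul]
        norm_num
      have h3 : (n : ℝ) ^ ((4 : ℝ) / 3) ≤ C := by
        rw [hC, mul_comm]; rw [h2] at h1; exact h1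
      have h4 : (Real.exp (-lam) * lam ^ n / n.factorial) * (n : ℝ) ^ ((4 : ℝ) / 3) ≤ a n := by
        rw [hrw, ha]
        have : Real.exp (-lam) * ((lam ^ n / n.factorial) * (n : ℝ) ^ ((4 : ℝ) / 3))
            = Real.exp (-lam) * (lam ^ n / n.factorial) * (n : ℝ) ^ ((4 : ℝ) / 3) := by ring
        rw [this]
        exact mul_le_mul_of_nonneg_left h3 (by positivity)
      exact h4.trans (le_add_of_nonneg_right (hbnn n))
    · -- n > e² λ : term ≤ b n
      have hfpos : (0 : ℝ) < n.factorial := by exact_mod_cast n.factorial_pos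
      have hlamle : lam ≤ (n : ℝ) / Real.exp 2 := by
        rw [le_div_iff₀ (Real.exp_pos 2)]
        nlinarith [Real.exp_pos 2]
      have hstepA : lam ^ n / n.factorial ≤ Real.exp (-(n : ℝ)) := by
        calc lam ^ n / n.factorial ≤ ((n : ℝ) / Real.exp 2) ^ n / n.factorial := by
              gcongr
          _ = ((n : ℝ) ^ n / n.factorial) / (Real.exp 2) ^ n := by
              rw [div_pow]; ring
          _ ≤ Real.exp (n : ℝ) / (Real.exp 2) ^ n := by
              gcongr
              exact pow_div_fact_le_exp' n
          _ = Real.exp (-(n : ℝ)) := by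
              rw [← Real.exp_nat_mul, ← Real.exp_sub]
              congr 1; ring
      have hstepB := rpow43_le n
      have hmul : (lam ^ n / n.factorial) * (n : ℝ) ^ ((4 : ℝ) / 3)
          ≤ Real.exp (-(n : ℝ)) * Real.exp ((n : ℝ) / 2) :=
        mul_le_mul hstepA hstepB (by positivity) (Real.exp_pos _).le
      have hre : Real.exp (-(n : ℝ)) * Real.exp ((n : ℝ) / 2) = r ^ n := by
        rw [hr, ← Real.exp_nat_mul, ← Real.exp_add]
        congr 1; ring
      have h5 : (Real.exp (-lam) * lam ^ n / n.factorial) * (n : ℝ) ^ ((4 : ℝ) / 3) ≤ b n := by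
        rw [hrw, hb]
        exact mul_le_mul_of_nonneg_left (by rw [← hre]; exact hmul) (Real.exp_pos _).le
      exact h5.trans (le_add_of_nonneg_left (hann n))
  have hsuma : Summable a :=
    ((Real.summable_pow_div_factorial lam).mul_left (Real.exp (-lam))).mul_right C
  have hsumb : Summable b := (summable_geometric_of_lt_one hr0 hr1).mul_left _
  have hsumab : Summable (fun n => a n + b n) := hsuma.add hsumb
  have hfs : Summable (fun n : ℕ =>
      (Real.exp (-lam) * lam ^ n / n.factorial) * (n : ℝ) ^ ((4 : ℝ) / 3)) :=
    Summable.of_nonneg_of_le (fun n => by positivity) key hsumab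
  have htsa : ∑' n, a n = C := by
    rw [ha]
    rw [tsum_mul_right, tsum_mul_left, ← exp_tsum', ← Real.exp_add]
    simp
  have htsb : ∑' n, b n = Real.exp (-lam) / (1 - r) := by
    rw [hb, tsum_mul_left, tsum_geometric_of_lt_one hr0 hr1, div_eq_mul_inv]
  calc (∑' n : ℕ, (Real.exp (-lam) * lam ^ n / n.factorial) * (n : ℝ) ^ ((4 : ℝ) / 3))
      ≤ ∑' n, (a n + b n) := Summable.tsum_le_tsum key hfs hsumab
    _ = (∑' n, a n) + ∑' n, b n := Summable.tsum_add hsuma hsumb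
    _ = C + Real.exp (-lam) / (1 - r) := by rw [htsa, htsb]



lemma small_case (lam : ℝ) (hlam : 0 ≤ lam) (hlt : lam < Real.exp (-2)) :
    (∑' n : ℕ, (Real.exp (-lam) * lam ^ n / n.factorial) * (n : ℝ) ^ ((4 : ℝ) / 3))
      ≤ Real.exp (-lam) * lam * ((2 : ℝ) ^ ((1 : ℝ) / 3) + Real.exp 1) := by
  set c : ℝ := (2 : ℝ) ^ ((1 : ℝ) / 3) with hcdef
  have hc0 : (0 : ℝ) < c := Real.rpow_pos_of_pos two_pos _
  have hc1 : (1 : ℝ) ≤ c := Real.one_le_rpow (by norm_num) (by norm_num)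
  have hc2 : c ≤ 2 := by
    calc c ≤ (2 : ℝ) ^ ((1 : ℝ)) := Real.rpow_le_rpow_of_exponent_le (by norm_num) (by norm_num)
      _ = 2 := Real.rpow_one 2
  set K : ℝ := Real.exp (-lam) * lam with hK
  have hKnn : 0 ≤ K := by positivity
  set g : ℕ → ℝ := fun n => K * ((c * lam) ^ (n - 1) / (n - 1).factorial) with hg
  have hgnn : ∀ n, 0 ≤ g n := fun n => by positivity
  have key : ∀ n : ℕ, (Real.exp (-lam) * lam ^ n / n.factorial) * (n : ℝ) ^ ((4 : ℝ) / 3)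
      ≤ g n := by
    intro n
    match n with
    | 0 =>
      rw [Nat.cast_zero, Real.zero_rpow (by norm_num : (4:ℝ)/3 ≠ 0), mul_zero]
      exact hgnn 0
    | (m + 1) =>
      have hpow : ((m : ℝ) + 1) ^ ((4 : ℝ) / 3) ≤ c ^ m * ((m : ℝ) + 1) := by
        have h1 : ((m : ℝ) + 1) ^ ((4 : ℝ) / 3)
            = ((m : ℝ) + 1) * ((m : ℝ) + 1) ^ ((1 : ℝ) / 3) := by
          rw [show (4:ℝ)/3 = 1 + 1/3 by norm_num, Real.rpow_add (by positivity), Real.rpow_one]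
        have h2 : ((m : ℝ) + 1) ^ ((1 : ℝ) / 3) ≤ c ^ m := by
          have hm2 : ((m : ℝ) + 1) ≤ (2 : ℝ) ^ m := by
            exact_mod_cast Nat.lt_two_pow_self (n := m)
          have h3 : ((m : ℝ) + 1) ^ ((1 : ℝ) / 3) ≤ ((2 : ℝ) ^ m) ^ ((1 : ℝ) / 3) :=
            Real.rpow_le_rpow (by positivity) hm2 (by norm_num)
          have h4 : ((2 : ℝ) ^ m) ^ ((1 : ℝ) / 3) = c ^ m := by
            rw [hcdef, ← Real.rpow_natCast (2:ℝ) m, ← Real.rpow_natCast ((2:ℝ) ^ ((1:ℝ)/3)) m,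
              ← Real.rpow_mul (by norm_num), ← Real.rpow_mul (by norm_num)]
            ring_nf
          rw [← h4]; exact h3
        calc ((m : ℝ) + 1) ^ ((4 : ℝ) / 3)
            = ((m : ℝ) + 1) * ((m : ℝ) + 1) ^ ((1 : ℝ) / 3) := h1
          _ ≤ ((m : ℝ) + 1) * c ^ m := by
              exact mul_le_mul_of_nonneg_left h2 (by positivity)
          _ = c ^ m * ((m : ℝ) + 1) := by ring
      have hfac : ((m + 1).factorial : ℝ) = ((m : ℝ) + 1) * (m.factorial : ℝ) := by
        rw [Nat.factorial_succ]; push_cast; ring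
      have hfacpos : (0 : ℝ) < (m.factorial : ℝ) := by exact_mod_cast m.factorial_pos
      have hrw : g (m + 1) = K * ((c * lam) ^ m / m.factorial) := by
        simp [hg]
      rw [hrw, hK]
      have lhs_eq : (Real.exp (-lam) * lam ^ (m+1) / (m+1).factorial)
            * ((m + 1 : ℕ) : ℝ) ^ ((4 : ℝ) / 3)
          = Real.exp (-lam) * (lam ^ (m+1) * (((m:ℝ) + 1) ^ ((4 : ℝ) / 3)) / (m+1).factorial) := by
        push_cast; ring
      rw [lhs_eq]
      have rhs_eq : Real.exp (-lam) * lam * ((c * lam) ^ m / m.factorial)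
          = Real.exp (-lam) * (lam * ((c * lam) ^ m / m.factorial)) := by ring
      rw [rhs_eq]
      refine mul_le_mul_of_nonneg_left ?_ (Real.exp_pos _).le
      have step1 : lam ^ (m+1) * (((m:ℝ) + 1) ^ ((4 : ℝ) / 3)) / (m+1).factorial
          ≤ lam ^ (m+1) * (c ^ m * ((m : ℝ) + 1)) / (m+1).factorial := by
        gcongr
      refine step1.trans (le_of_eq ?_)
      rw [hfac, pow_succ, mul_pow]
      field_simp
  have hsumu : Summable (fun n : ℕ => K * ((c * lam) ^ n / n.factorial)) :=
    (Real.summable_pow_div_factorial (c * lam)).mul_left K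
  have hsumg : Summable g := by
    have := (summable_nat_add_iff (f := g) 1).mp (by
      simpa [hg] using hsumu)
    exact this
  have hsumf : Summable (fun n : ℕ =>
      (Real.exp (-lam) * lam ^ n / n.factorial) * (n : ℝ) ^ ((4 : ℝ) / 3)) :=
    Summable.of_nonneg_of_le (fun n => by positivity) key hsumg
  have htsg : ∑' n, g n = K * (1 + Real.exp (c * lam)) := by
    rw [Summable.tsum_eq_zero_add hsumg]
    have h0 : g 0 = K := by simp [hg]
    have h1 : (∑' n : ℕ, g (n + 1)) = K * Real.exp (c * lam) := by
      have : (fun n : ℕ => g (n + 1)) = fun n : ℕ => K * ((c * lam) ^ n / n.factorial) := by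
        funext n; simp [hg]
      rw [this, tsum_mul_left, ← exp_tsum']
    rw [h0, h1]; ring
  have hexple : Real.exp (c * lam) ≤ Real.exp 1 := by
    apply Real.exp_le_exp.mpr
    have h2 : Real.exp (-2 : ℝ) ≤ 1 / 3 := by
      rw [Real.exp_neg]
      rw [inv_le_comm₀ (Real.exp_pos 2) (by norm_num)]
      calc ((1 : ℝ) / 3)⁻¹ = 3 := by norm_num
        _ ≤ Real.exp 2 := by nlinarith [Real.add_one_le_exp (2 : ℝ)]
    nlinarith
  calc (∑' n : ℕ, (Real.exp (-lam) * lam ^ n / n.factorial) * (n : ℝ) ^ ((4 : ℝ) / 3))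
      ≤ ∑' n, g n := Summable.tsum_le_tsum key hsumf hsumg
    _ = K * (1 + Real.exp (c * lam)) := htsg
    _ ≤ K * (c + Real.exp 1) := by
        refine mul_le_mul_of_nonneg_left ?_ hKnn
        exact add_le_add hc1 hexple
    _ = Real.exp (-lam) * lam * (c + Real.exp 1) := by rw [hK]

/-- Bounds on `E[Z^(4/3)]` for `Z ~ Poisson(λ)`:
if `λ ≥ e⁻²` then `E[Z^(4/3)] ≤ λ^(4/3) e^(8/3) + e^(-λ)/(1 - e^(-1/2))`;
if `λ < e⁻²` then `E[Z^(4/3)] ≤ e^(-λ) λ (2^(1/3) + e)`. -/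
theorem poisson_fourthirds_moment_bounds (lam : ℝ) (hlam : 0 ≤ lam) :
    (Real.exp (-2) ≤ lam →
      (∑' n : ℕ, (Real.exp (-lam) * lam ^ n / n.factorial) * (n : ℝ) ^ ((4 : ℝ) / 3))
        ≤ lam ^ ((4 : ℝ) / 3) * Real.exp (8 / 3)
            + Real.exp (-lam) / (1 - Real.exp (-(1 / 2)))) ∧
    (lam < Real.exp (-2) →
      (∑' n : ℕ, (Real.exp (-lam) * lam ^ n / n.factorial) * (n : ℝ) ^ ((4 : ℝ) / 3))
        ≤ Real.exp (-lam) * lam * ((2 : ℝ) ^ ((1 : ℝ) / 3) + Real.exp 1)) :=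
  ⟨fun _ => big_case lam hlam, fun h => small_case lam hlam h⟩
end

section
/- If C_π = sqrt(Σ_i π_i² exp(−2(1+v)kπ_i))/k and I = I_{v,π} as defined via the three constraints (π_I ≤ sqrt(C_π/I), tail second-moment constraint Σ_{i≥I} exp(−2kπ_i)π_i² ≤ u·C_π contribution, and tail mass constraint), and if π_i² exp(−2kπ_i) ≤ 1/k² for all i, then C_π ≤ max( sqrt(2I)/k², 2u/k² ), and hence sqrt(C_π)/I^{1/4} ≤ √2 / k for 0 < u < 1. -/
open Real Finset

set_option maxHeartbeats 1000000 in
/-- Step 1 of the lemma "lower": with `C_π = sqrt(Σ π_i² exp(-2(1+v)kπ_i))/k`, if every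
term satisfies `π_i² exp(-2kπ_i) ≤ 1/k²` and the tail beyond `I` satisfies
`Σ_{i ≥ I} exp(-2(1+v)kπ_i) π_i² ≤ u C_π`, then
`C_π ≤ max(√(2I)/k², 2u/k²)`, hence `√C_π / I^{1/4} ≤ √2 / k`. -/
theorem Cpi_bound_of_tail_constraint
    (d k : ℕ) (hk : 0 < k)
    (pp : ℕ → ℝ) (hpp0 : ∀ i, 0 ≤ pp i) (hppsum : ∑ i ∈ range d, pp i ≤ 1)
    (hanti : Antitone pp)
    (u v : ℝ) (hu0 : 0 < u) (hu1 : u < 1) (hv : 0 ≤ v)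
    (C : ℝ)
    (hC : C = Real.sqrt (∑ i ∈ range d,
        pp i ^ 2 * Real.exp (-2 * (1 + v) * k * pp i)) / k)
    (I : ℕ) (hI1 : 1 ≤ I) (hId : I ≤ d)
    (hpt : ∀ i, pp i ^ 2 * Real.exp (-2 * k * pp i) ≤ 1 / (k : ℝ) ^ 2)
    (htail : ∑ i ∈ Finset.Ico I d,
        Real.exp (-2 * (1 + v) * k * pp i) * pp i ^ 2 ≤ u * C) :
    C ≤ max (Real.sqrt (2 * I) / (k : ℝ) ^ 2) (2 * u / (k : ℝ) ^ 2) ∧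
      Real.sqrt C / (I : ℝ) ^ ((1 : ℝ) / 4) ≤ Real.sqrt 2 / k := by

  have hK : (0:ℝ) < (k:ℝ) := by exact_mod_cast hk
  have hK2 : (0:ℝ) < (k:ℝ)^2 := by positivity
  set S := ∑ i ∈ range d, pp i ^ 2 * Real.exp (-2 * (1 + v) * k * pp i) with hSdef
  have hS0 : 0 ≤ S := Finset.sum_nonneg fun i _ => by positivity
  have hC0 : 0 ≤ C := by rw [hC]; positivity
  have h1 : C * k = Real.sqrt S := by rw [hC]; field_simp
  have hS : S = C ^ 2 * (k:ℝ) ^ 2 := by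
    rw [← Real.sq_sqrt hS0, ← h1]; ring
  have hhead : ∑ i ∈ range I, pp i ^ 2 * Real.exp (-2 * (1 + v) * k * pp i)
      ≤ (I:ℝ) / (k:ℝ)^2 := by
    calc ∑ i ∈ range I, pp i ^ 2 * Real.exp (-2 * (1 + v) * k * pp i)
        ≤ ∑ i ∈ range I, 1 / (k:ℝ)^2 := by
          refine Finset.sum_le_sum fun i _ => ?_
          have hexp : Real.exp (-2 * (1 + v) * k * pp i) ≤ Real.exp (-2 * k * pp i) := by
            apply Real.exp_le_exp.2
            nlinarith [mul_nonneg (mul_nonneg hv hK.le) (hpp0 i)]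
          calc pp i ^ 2 * Real.exp (-2 * (1 + v) * k * pp i)
              ≤ pp i ^ 2 * Real.exp (-2 * k * pp i) :=
                mul_le_mul_of_nonneg_left hexp (sq_nonneg _)
            _ ≤ 1 / (k:ℝ)^2 := hpt i
      _ = (I:ℝ) / (k:ℝ)^2 := by
          rw [Finset.sum_const, Finset.card_range]; simp [nsmul_eq_mul]; ring
  have htail' : ∑ i ∈ Finset.Ico I d, pp i ^ 2 * Real.exp (-2 * (1 + v) * k * pp i)
      ≤ u * C := by
    simpa [mul_comm] using htail
  have hsplit : S = (∑ i ∈ range I, pp i ^ 2 * Real.exp (-2 * (1 + v) * k * pp i))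
      + ∑ i ∈ Finset.Ico I d, pp i ^ 2 * Real.exp (-2 * (1 + v) * k * pp i) := by
    rw [hSdef, Finset.sum_range_add_sum_Ico _ hId]
  have hkey : C ^ 2 * (k:ℝ) ^ 2 ≤ (I:ℝ) / (k:ℝ)^2 + u * C := by
    rw [← hS, hsplit]; linarith
  have hIK : (I:ℝ) / (k:ℝ)^2 * (k:ℝ)^2 = (I:ℝ) := by field_simp
  have hfirst : C ≤ max (Real.sqrt (2 * I) / (k:ℝ)^2) (2 * u / (k:ℝ)^2) := by
    rcases le_or_gt (u * C) ((I:ℝ) / (k:ℝ)^2) with h | h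
    · refine le_max_of_le_left ?_
      have h2 : (C * (k:ℝ)^2) ^ 2 ≤ 2 * I := by nlinarith [hkey, h, hK2, hIK]
      have h3 : C * (k:ℝ)^2 ≤ Real.sqrt (2 * I) := by
        have := Real.sqrt_le_sqrt h2
        rwa [Real.sqrt_sq (by positivity)] at this
      rw [div_eq_mul_inv]
      calc C = C * (k:ℝ)^2 * ((k:ℝ)^2)⁻¹ := by field_simp
        _ ≤ Real.sqrt (2 * I) * ((k:ℝ)^2)⁻¹ := by
            apply mul_le_mul_of_nonneg_right h3 (by positivity)
    · refine le_max_of_le_right ?_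
      rcases eq_or_lt_of_le hC0 with h0 | h0
      · rw [← h0]; positivity
      · have hck : C * (k:ℝ)^2 ≤ 2 * u := by nlinarith [hkey, h, h0]
        rw [le_div_iff₀ hK2]; linarith
  refine ⟨hfirst, ?_⟩
  set J := (I:ℝ) ^ ((1:ℝ)/4) with hJdef
  have hI1' : (1:ℝ) ≤ (I:ℝ) := by exact_mod_cast hI1
  have hJ1 : 1 ≤ J := Real.one_le_rpow hI1' (by norm_num)
  have hJ0 : 0 < J := lt_of_lt_of_le one_pos hJ1
  have hJ4 : J ^ (4:ℕ) = (I:ℝ) := by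
    rw [hJdef, ← Real.rpow_natCast ((I:ℝ) ^ ((1:ℝ)/4)) 4, ← Real.rpow_mul (by positivity)]
    norm_num
  have hsq2 : (0:ℝ) ≤ Real.sqrt 2 := Real.sqrt_nonneg 2
  have hsqC : Real.sqrt C ≤ Real.sqrt 2 * J / k := by
    rcases max_cases (Real.sqrt (2 * I) / (k:ℝ)^2) (2 * u / (k:ℝ)^2) with ⟨heq, _⟩ | ⟨heq, _⟩
    · -- C ≤ √(2I)/k²
      have hJ2 : Real.sqrt (I:ℝ) = J ^ 2 := by
        rw [← hJ4]; rw [show (J:ℝ)^(4:ℕ) = (J^2)^2 by ring, Real.sqrt_sq (by positivity)]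
      have hCle : C ≤ (Real.sqrt 2 * J / k) ^ 2 := by
        have h2I : Real.sqrt (2 * I) = Real.sqrt 2 * J ^ 2 := by
          rw [Real.sqrt_mul (by norm_num), hJ2]
        have := hfirst
        rw [heq, h2I] at this
        have hsq2sq : (Real.sqrt 2) ^ 2 = 2 := Real.sq_sqrt (by norm_num)
        have h22 : Real.sqrt 2 ≤ 2 := by
          nlinarith [Real.sq_sqrt (show (0:ℝ) ≤ 2 by norm_num), Real.sqrt_nonneg 2]
        rw [div_pow, mul_pow, hsq2sq]
        calc C ≤ Real.sqrt 2 * J ^ 2 / (k:ℝ)^2 := this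
          _ ≤ 2 * J ^ 2 / (k:ℝ)^2 := by gcongr
      have := Real.sqrt_le_sqrt hCle
      rwa [Real.sqrt_sq (by positivity)] at this
    · have hCle : C ≤ (Real.sqrt 2 / k) ^ 2 := by
        have := hfirst
        rw [heq] at this
        have hsq2sq : (Real.sqrt 2) ^ 2 = 2 := Real.sq_sqrt (by norm_num)
        rw [div_pow, hsq2sq]
        calc C ≤ 2 * u / (k:ℝ)^2 := this
          _ ≤ 2 / (k:ℝ)^2 := by
              rw [div_le_div_iff₀ hK2 hK2]; nlinarith
      have h4 : Real.sqrt C ≤ Real.sqrt 2 / k := by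
        have := Real.sqrt_le_sqrt hCle
        rwa [Real.sqrt_sq (by positivity)] at this
      calc Real.sqrt C ≤ Real.sqrt 2 / k := h4
        _ ≤ Real.sqrt 2 * J / k := by
            gcongr
            exact le_mul_of_one_le_right hsq2 hJ1
  rw [div_le_div_iff₀ hJ0 hK]
  have := mul_le_mul_of_nonneg_right hsqC hK.le
  calc Real.sqrt C * k ≤ Real.sqrt 2 * J / k * k := this
    _ = Real.sqrt 2 * J := by field_simp
end
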